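/- Let X be a finite subset of R^k and let H be a Hamiltonian cycle on X minimizing the sum of squared edge lengths among all Hamiltonian cycles on X. Then for any four edges e_1, e_2, e_3, e_4 of H, listed in the cyclic order in which they appear along H, the sum |m_1 - m_3|^2 + |m_2 - m_4|^2 is at least (|e_1|^2 + |e_2|^2 + |e_3|^2 + |e_4|^2)/4, where m_i denotes the midpoint of e_i. -/

import Mathlib

open Finset

/-- Cyclic successor on `Fin n`. -/
def nxt {n : ℕ} (i : Fin n) : Fin n := ⟨(i.val + 1) % n, Nat.mod_lt _ i.pos⟩

/-- `f` is a Hamiltonian cycle on the finite set `X`: a cyclic ordering of the points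
of `X`, i.e. an injective enumeration of `X` by `Fin X.card`; its edges join `f i`
and `f (nxt i)`. -/
def IsHamCycle {k : ℕ} (X : Finset (EuclideanSpace ℝ (Fin k)))
    (f : Fin X.card → EuclideanSpace ℝ (Fin k)) : Prop :=
  Function.Injective f ∧ ∀ x, x ∈ X ↔ ∃ i, f i = x

lemma nxt_val {n : ℕ} (i : Fin n) :
    (nxt i).val = if i.val + 1 = n then 0 else i.val + 1 := by
  have h := i.isLt
  show (i.val + 1) % n = _
  split_ifs with h1
  · rw [h1, Nat.mod_self]
  · rw [Nat.mod_eq_of_lt (by omega)]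

/-- The underlying map (on `ℕ`) of the 2-opt move reversing the segment `(p, q]`. -/
def revn (p q t : ℕ) : ℕ := if p < t ∧ t ≤ q then p + q + 1 - t else t

/-- The 2-opt move reversing the segment `(p, q]`, as a permutation of `Fin n`. -/
def revPerm {n : ℕ} (p q : Fin n) : Equiv.Perm (Fin n) where
  toFun t := ⟨revn p.val q.val t.val, by
    have hq := q.isLt; have ht := t.isLt; unfold revn; split_ifs <;> omega⟩
  invFun t := ⟨revn p.val q.val t.val, by
    have hq := q.isLt; have ht := t.isLt; unfold revn; split_ifs <;> omega⟩
  left_inv t := by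
    have ht := t.isLt
    dsimp only
    apply Fin.ext
    show revn _ _ _ = _
    unfold revn; split_ifs <;> omega
  right_inv t := by
    have ht := t.isLt
    dsimp only
    apply Fin.ext
    show revn _ _ _ = _
    unfold revn; split_ifs <;> omega

/-- The underlying map (on `ℕ`) of the double-bridge move on `p1 < p2 < p3 < p4`. -/
def dbn (p1 p2 p3 p4 t : ℕ) : ℕ :=
  if t ≤ p1 then t
  else if t ≤ p1 + (p4 - p3) then t + (p3 - p1)
  else if t ≤ p1 + (p4 - p2) then t + (p2 + p3) - (p1 + p4)
  else if t ≤ p4 then t - (p4 - p2)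
  else t

/-- The inverse of `dbn`. -/
def dbninv (p1 p2 p3 p4 t : ℕ) : ℕ :=
  if t ≤ p1 then t
  else if t ≤ p2 then t + (p4 - p2)
  else if t ≤ p3 then t + (p1 + p4) - (p2 + p3)
  else if t ≤ p4 then t - (p3 - p1)
  else t

set_option maxHeartbeats 1000000 in
/-- The double-bridge move as a permutation of `Fin n`. -/
def dbPerm {n : ℕ} (p1 p2 p3 p4 : Fin n) (h12 : p1.val < p2.val)
    (h23 : p2.val < p3.val) (h34 : p3.val < p4.val) : Equiv.Perm (Fin n) where
  toFun t := ⟨dbn p1.val p2.val p3.val p4.val t.val, by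
    have h4 := p4.isLt; have ht := t.isLt; unfold dbn; split_ifs <;> omega⟩
  invFun t := ⟨dbninv p1.val p2.val p3.val p4.val t.val, by
    have h4 := p4.isLt; have ht := t.isLt; unfold dbninv; split_ifs <;> omega⟩
  left_inv t := by
    have ht := t.isLt
    dsimp only
    apply Fin.ext
    show dbninv _ _ _ _ _ = _
    unfold dbn dbninv; split_ifs <;> omega
  right_inv t := by
    have ht := t.isLt
    dsimp only
    apply Fin.ext
    show dbn _ _ _ _ _ = _
    unfold dbn dbninv; split_ifs <;> omega

/-- Edge-sum bookkeeping for the 2-opt move. -/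
lemma rev_core {n : ℕ} (c : Fin n → Fin n → ℝ) (hc : ∀ i j, c i j = c j i)
    (p q : Fin n) (hpq : p.val < q.val) :
    ∑ i, c (revPerm p q i) (revPerm p q (nxt i))
      = ∑ i, c i (nxt i) - c p (nxt p) - c q (nxt q) + c p q + c (nxt p) (nxt q) := by
  have hq := q.isLt
  have hp := p.isLt
  have hne : p ≠ q := by intro h; rw [h] at hpq; omega
  set σ : Fin n → Fin n := fun t => revPerm p q t with hσ
  have hσval : ∀ t : Fin n, (σ t).val = revn p.val q.val t.val := fun t => rfl
  set F : Fin n → ℝ := fun i => c (σ i) (σ (nxt i)) with hF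
  set G : Fin n → ℝ := fun i => c i (nxt i) with hG
  have hsub : ({p, q} : Finset (Fin n)) ⊆ univ := subset_univ _
  have hsplitF := Finset.sum_sdiff (f := F) hsub
  have hsplitG := Finset.sum_sdiff (f := G) hsub
  have hpairF : ∑ i ∈ ({p, q} : Finset (Fin n)), F i = F p + F q := Finset.sum_pair hne
  have hpairG : ∑ i ∈ ({p, q} : Finset (Fin n)), G i = G p + G q := Finset.sum_pair hne
  have hmid : ∑ i ∈ univ \ {p, q}, F i = ∑ i ∈ univ \ {p, q}, G i := by
    have hψb : ∀ t : Fin n,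
        (if p.val < t.val ∧ t.val < q.val then p.val + q.val - t.val else t.val) < n := by
      intro t; have := t.isLt; split_ifs <;> omega
    set ψ : Fin n → Fin n := fun t => ⟨_, hψb t⟩ with hψ
    have hψval : ∀ t : Fin n, (ψ t).val
        = if p.val < t.val ∧ t.val < q.val then p.val + q.val - t.val else t.val := fun t => rfl
    have hmem : ∀ a : Fin n,
        a ∈ univ \ ({p, q} : Finset (Fin n)) ↔ (a.val ≠ p.val ∧ a.val ≠ q.val) := by
      intro a
      simp only [Finset.mem_sdiff, Finset.mem_univ, true_and, Finset.mem_insert,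
        Finset.mem_singleton, not_or, Fin.ext_iff]
    have hψmem : ∀ a ∈ univ \ ({p, q} : Finset (Fin n)),
        ψ a ∈ univ \ ({p, q} : Finset (Fin n)) := by
      intro a ha
      rw [hmem] at ha ⊢
      rw [hψval]
      split_ifs <;> omega
    have hψinv : ∀ a ∈ univ \ ({p, q} : Finset (Fin n)), ψ (ψ a) = a := by
      intro a ha
      apply Fin.ext
      rw [hψval, hψval]
      have := a.isLt
      split_ifs <;> omega
    refine Finset.sum_nbij' ψ ψ hψmem hψmem hψinv hψinv ?_
    intro a ha
    rw [hmem] at ha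
    have hav := a.isLt
    rw [hF, hG]
    dsimp only
    rcases lt_or_gt_of_ne ha.1 with h1 | h1
    · have e1 : σ a = a := by apply Fin.ext; rw [hσval]; unfold revn; split_ifs <;> omega
      have e2 : σ (nxt a) = nxt a := by
        apply Fin.ext; rw [hσval]; unfold revn; rw [nxt_val]; split_ifs <;> omega
      have e3 : ψ a = a := by apply Fin.ext; rw [hψval]; split_ifs <;> omega
      rw [e1, e2, e3]
    · rcases lt_or_gt_of_ne ha.2 with h2 | h2
      · have e1 : (σ a).val = p.val + q.val + 1 - a.val := by
          rw [hσval]; unfold revn; split_ifs <;> omega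
        have e2 : (σ (nxt a)).val = p.val + q.val - a.val := by
          rw [hσval]; unfold revn; rw [nxt_val]; split_ifs <;> omega
        have e3 : (ψ a).val = p.val + q.val - a.val := by rw [hψval]; split_ifs <;> omega
        have e4 : (nxt (ψ a)).val = p.val + q.val + 1 - a.val := by
          rw [nxt_val, e3]; split_ifs <;> omega
        have g1 : σ a = nxt (ψ a) := by apply Fin.ext; omega
        have g2 : σ (nxt a) = ψ a := by apply Fin.ext; omega
        rw [g1, g2, hc]
      · have e1 : σ a = a := by apply Fin.ext; rw [hσval]; unfold revn; split_ifs <;> omega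
        have e2 : σ (nxt a) = nxt a := by
          apply Fin.ext; rw [hσval]; unfold revn; rw [nxt_val]; split_ifs <;> omega
        have e3 : ψ a = a := by apply Fin.ext; rw [hψval]; split_ifs <;> omega
        rw [e1, e2, e3]
  have hFp : F p = c p q := by
    rw [hF]; dsimp only
    have e1 : σ p = p := by apply Fin.ext; rw [hσval]; unfold revn; split_ifs <;> omega
    have e2 : σ (nxt p) = q := by
      apply Fin.ext; rw [hσval]; unfold revn; rw [nxt_val]; split_ifs <;> omega
    rw [e1, e2]
  have hFq : F q = c (nxt p) (nxt q) := by
    rw [hF]; dsimp only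
    have e1 : σ q = nxt p := by
      apply Fin.ext; rw [hσval, nxt_val]; unfold revn; split_ifs <;> omega
    have e2 : σ (nxt q) = nxt q := by
      apply Fin.ext; rw [hσval]; unfold revn; rw [nxt_val]; split_ifs <;> omega
    rw [e1, e2]
  have hGp : G p = c p (nxt p) := rfl
  have hGq : G q = c q (nxt q) := rfl
  calc ∑ i, F i = ∑ i ∈ univ \ {p, q}, F i + (F p + F q) := by rw [← hpairF, hsplitF]
    _ = ∑ i ∈ univ \ {p, q}, G i + (c p q + c (nxt p) (nxt q)) := by rw [hmid, hFp, hFq]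
    _ = _ := by rw [← hsplitG, hpairG, hGp, hGq]; ring_nf

set_option maxHeartbeats 2000000 in
/-- Edge-sum bookkeeping for the double-bridge move. -/
lemma db_core {n : ℕ} (c : Fin n → Fin n → ℝ)
    (p1 p2 p3 p4 : Fin n) (h12 : p1.val < p2.val) (h23 : p2.val < p3.val)
    (h34 : p3.val < p4.val) :
    ∑ i, c (dbPerm p1 p2 p3 p4 h12 h23 h34 i) (dbPerm p1 p2 p3 p4 h12 h23 h34 (nxt i))
      = ∑ i, c i (nxt i)
        - c p1 (nxt p1) - c p2 (nxt p2) - c p3 (nxt p3) - c p4 (nxt p4)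
        + c p1 (nxt p3) + c p3 (nxt p1) + c p2 (nxt p4) + c p4 (nxt p2) := by
  have h4 := p4.isLt
  set σ : Equiv.Perm (Fin n) := dbPerm p1 p2 p3 p4 h12 h23 h34 with hσdef
  have hσval : ∀ t : Fin n, (σ t).val = dbn p1.val p2.val p3.val p4.val t.val := fun t => rfl
  set F : Fin n → ℝ := fun i => c (σ i) (σ (nxt i)) with hF
  set G : Fin n → ℝ := fun i => c i (nxt i) with hG
  set m2 : Fin n := ⟨p1.val + p4.val - p3.val, by omega⟩ with hm2
  set m3 : Fin n := ⟨p1.val + p4.val - p2.val, by omega⟩ with hm3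
  have hs1 : σ p1 = p1 := by apply Fin.ext; rw [hσval]; unfold dbn; split_ifs <;> omega
  have hs2 : σ m2 = p4 := by
    apply Fin.ext; rw [hσval]
    show dbn _ _ _ _ (p1.val + p4.val - p3.val) = _
    unfold dbn; split_ifs <;> omega
  have hs3 : σ m3 = p3 := by
    apply Fin.ext; rw [hσval]
    show dbn _ _ _ _ (p1.val + p4.val - p2.val) = _
    unfold dbn; split_ifs <;> omega
  have hs4 : σ p4 = p2 := by apply Fin.ext; rw [hσval]; unfold dbn; split_ifs <;> omega
  have hcomm : ∀ a : Fin n, a.val ≠ p1.val → a.val ≠ m2.val → a.val ≠ m3.val →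
      a.val ≠ p4.val → σ (nxt a) = nxt (σ a) := by
    intro a e1 e2 e3 e4
    have ha := a.isLt
    apply Fin.ext
    rw [hσval, nxt_val, nxt_val, hσval]
    show dbn _ _ _ _ _ = _
    unfold dbn
    simp only [hm2, hm3] at e2 e3
    split_ifs <;> omega
  have hFp1 : F p1 = c p1 (nxt p3) := by
    rw [hF]; dsimp only
    rw [hs1]
    congr 1
    apply Fin.ext
    rw [hσval, nxt_val, nxt_val]
    show dbn _ _ _ _ _ = _
    unfold dbn; split_ifs <;> omega
  have hFm2 : F m2 = c p4 (nxt p2) := by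
    rw [hF]; dsimp only
    rw [hs2]
    congr 1
    apply Fin.ext
    rw [hσval, nxt_val, nxt_val]
    show dbn _ _ _ _ _ = _
    unfold dbn; simp only [hm2]; split_ifs <;> omega
  have hFm3 : F m3 = c p3 (nxt p1) := by
    rw [hF]; dsimp only
    rw [hs3]
    congr 1
    apply Fin.ext
    rw [hσval, nxt_val, nxt_val]
    show dbn _ _ _ _ _ = _
    unfold dbn; simp only [hm3]; split_ifs <;> omega
  have hFp4 : F p4 = c p2 (nxt p4) := by
    rw [hF]; dsimp only
    rw [hs4]
    congr 1
    apply Fin.ext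
    rw [hσval, nxt_val]
    show dbn _ _ _ _ _ = _
    unfold dbn; split_ifs <;> omega
  set E' : Finset (Fin n) := {p1, m2, m3, p4} with hE'
  set E : Finset (Fin n) := {p1, p2, p3, p4} with hE
  have hmemE' : ∀ a : Fin n, a ∈ E' ↔ (a = p1 ∨ a = m2 ∨ a = m3 ∨ a = p4) := by
    intro a; simp [hE']
  have hmemE : ∀ a : Fin n, a ∈ E ↔ (a = p1 ∨ a = p2 ∨ a = p3 ∨ a = p4) := by
    intro a; simp [hE]
  have hmid : ∑ i ∈ univ \ E', F i = ∑ i ∈ univ \ E, G i := by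
    refine Finset.sum_nbij' (fun a => σ a) (fun b => σ.symm b) ?_ ?_ ?_ ?_ ?_
    · intro a ha
      simp only [Finset.mem_sdiff, Finset.mem_univ, true_and] at ha ⊢
      rw [hmemE'] at ha
      rw [hmemE]
      push_neg at ha ⊢
      refine ⟨?_, ?_, ?_, ?_⟩
      · intro h; exact ha.1 (σ.injective (h.trans hs1.symm))
      · intro h; exact ha.2.2.2 (σ.injective (h.trans hs4.symm))
      · intro h; exact ha.2.2.1 (σ.injective (h.trans hs3.symm))
      · intro h; exact ha.2.1 (σ.injective (h.trans hs2.symm))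
    · intro b hb
      simp only [Finset.mem_sdiff, Finset.mem_univ, true_and] at hb ⊢
      rw [hmemE] at hb
      rw [hmemE']
      push_neg at hb ⊢
      refine ⟨?_, ?_, ?_, ?_⟩
      · intro h; apply hb.1; rw [← hs1, ← h, Equiv.apply_symm_apply]
      · intro h; apply hb.2.2.2; rw [← hs2, ← h, Equiv.apply_symm_apply]
      · intro h; apply hb.2.2.1; rw [← hs3, ← h, Equiv.apply_symm_apply]
      · intro h; apply hb.2.1; rw [← hs4, ← h, Equiv.apply_symm_apply]
    · intro a _; exact σ.symm_apply_apply a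
    · intro b _; exact σ.apply_symm_apply b
    · intro a ha
      simp only [Finset.mem_sdiff, Finset.mem_univ, true_and] at ha
      rw [hmemE'] at ha
      push_neg at ha
      rw [hF, hG]
      dsimp only
      rw [hcomm a (fun h => ha.1 (Fin.ext h)) (fun h => ha.2.1 (Fin.ext h))
        (fun h => ha.2.2.1 (Fin.ext h)) (fun h => ha.2.2.2 (Fin.ext h))]
  have hsubE' : E' ⊆ univ := subset_univ _
  have hsubE : E ⊆ univ := subset_univ _
  have hsplitF := Finset.sum_sdiff (f := F) hsubE'
  have hsplitG := Finset.sum_sdiff (f := G) hsubE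
  have hsumE' : ∑ i ∈ E', F i = F p1 + F m2 + F m3 + F p4 := by
    rw [hE']
    rw [Finset.sum_insert (by
          simp only [Finset.mem_insert, Finset.mem_singleton, Fin.ext_iff, hm2, hm3, not_or]
          omega),
        Finset.sum_insert (by
          simp only [Finset.mem_insert, Finset.mem_singleton, Fin.ext_iff, hm2, hm3, not_or]
          omega),
        Finset.sum_insert (by
          simp only [Finset.mem_insert, Finset.mem_singleton, Fin.ext_iff, hm2, hm3, not_or]
          omega),
        Finset.sum_singleton]
    ring
  have hsumE : ∑ i ∈ E, G i = G p1 + G p2 + G p3 + G p4 := by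
    rw [hE]
    rw [Finset.sum_insert (by
          simp only [Finset.mem_insert, Finset.mem_singleton, Fin.ext_iff, not_or]; omega),
        Finset.sum_insert (by
          simp only [Finset.mem_insert, Finset.mem_singleton, Fin.ext_iff, not_or]; omega),
        Finset.sum_insert (by
          simp only [Finset.mem_insert, Finset.mem_singleton, Fin.ext_iff, not_or]; omega),
        Finset.sum_singleton]
    ring
  have hGv : ∀ i : Fin n, G i = c i (nxt i) := fun i => rfl
  calc ∑ i, F i = ∑ i ∈ univ \ E', F i + ∑ i ∈ E', F i := hsplitF.symm
    _ = ∑ i ∈ univ \ E, G i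
        + (c p1 (nxt p3) + c p4 (nxt p2) + c p3 (nxt p1) + c p2 (nxt p4)) := by
        rw [hmid, hsumE', hFp1, hFm2, hFm3, hFp4]
    _ = _ := by
        have := hsplitG
        rw [hsumE] at this
        rw [hGv p1, hGv p2, hGv p3, hGv p4] at this
        linarith

/-- Midpoint identity in a real inner product space. -/
lemma four_mid {E : Type*} [NormedAddCommGroup E] [InnerProductSpace ℝ E] (A B C D : E) :
    4 * ‖midpoint ℝ A B - midpoint ℝ C D‖ ^ 2
      = ‖A - C‖ ^ 2 + ‖B - D‖ ^ 2 + ‖A - D‖ ^ 2 + ‖C - B‖ ^ 2 - ‖A - B‖ ^ 2 - ‖C - D‖ ^ 2 := by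
  have hmidp : ∀ x y : E, midpoint ℝ x y = (2 : ℝ)⁻¹ • (x + y) := fun x y => by
    rw [midpoint_eq_smul_add, invOf_eq_inv]
  have hm : midpoint ℝ A B - midpoint ℝ C D = (2 : ℝ)⁻¹ • (A + B - (C + D)) := by
    rw [hmidp, hmidp]; module
  rw [hm]
  have h2 : ‖(2 : ℝ)⁻¹ • (A + B - (C + D))‖ ^ 2 = (4 : ℝ)⁻¹ * ‖A + B - (C + D)‖ ^ 2 := by
    rw [norm_smul]
    simp [norm_inv]
    ring
  rw [h2]
  have expand : ∀ x y : E, ‖x - y‖ ^ 2 = ‖x‖ ^ 2 - 2 * inner ℝ x y + ‖y‖ ^ 2 := fun x y => by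
    rw [@norm_sub_sq_real]
  have expand2 : ‖A + B - (C + D)‖ ^ 2
      = ‖A‖^2 + ‖B‖^2 + ‖C‖^2 + ‖D‖^2
        + 2 * inner ℝ A B - 2 * inner ℝ A C - 2 * inner ℝ A D - 2 * inner ℝ C B - 2 * inner ℝ B D
        + 2 * (inner ℝ C D : ℝ) := by
    have h3 : ‖A + B - (C + D)‖ ^ 2 = (inner ℝ (A + B - (C + D)) (A + B - (C + D)) : ℝ) :=
      (real_inner_self_eq_norm_sq _).symm
    rw [h3]
    simp only [inner_sub_left, inner_sub_right, inner_add_left, inner_add_right]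
    rw [real_inner_comm B A, real_inner_comm C A, real_inner_comm D A, real_inner_comm B C,
      real_inner_comm D B, real_inner_comm D C]
    rw [real_inner_self_eq_norm_sq, real_inner_self_eq_norm_sq, real_inner_self_eq_norm_sq,
      real_inner_self_eq_norm_sq]
    ring
  rw [expand2, expand A C, expand B D, expand A D, expand C B, expand A B, expand C D]
  ring

theorem hamCycle_four_edges (k : ℕ) (X : Finset (EuclideanSpace ℝ (Fin k)))
    (f : Fin X.card → EuclideanSpace ℝ (Fin k)) (hf : IsHamCycle X f)
    (hmin : ∀ g : Fin X.card → EuclideanSpace ℝ (Fin k), IsHamCycle X g →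
      ∑ i, ‖f i - f (nxt i)‖ ^ 2 ≤ ∑ i, ‖g i - g (nxt i)‖ ^ 2)
    (i₁ i₂ i₃ i₄ : Fin X.card) (h12 : i₁ < i₂) (h23 : i₂ < i₃) (h34 : i₃ < i₄) :
    (‖f i₁ - f (nxt i₁)‖ ^ 2 + ‖f i₂ - f (nxt i₂)‖ ^ 2 + ‖f i₃ - f (nxt i₃)‖ ^ 2 +
        ‖f i₄ - f (nxt i₄)‖ ^ 2) / 4 ≤
      ‖midpoint ℝ (f i₁) (f (nxt i₁)) - midpoint ℝ (f i₃) (f (nxt i₃))‖ ^ 2 +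
        ‖midpoint ℝ (f i₂) (f (nxt i₂)) - midpoint ℝ (f i₄) (f (nxt i₄))‖ ^ 2 := by
  have hcomp : ∀ σ : Equiv.Perm (Fin X.card), IsHamCycle X (f ∘ σ) := by
    intro σ
    refine ⟨hf.1.comp σ.injective, fun x => (hf.2 x).trans ⟨?_, ?_⟩⟩
    · rintro ⟨i, hi⟩; exact ⟨σ.symm i, by simp [Function.comp, hi]⟩
    · rintro ⟨i, hi⟩; exact ⟨σ i, hi⟩
  have hle : ∀ σ : Equiv.Perm (Fin X.card),
      ∑ i, ‖f i - f (nxt i)‖ ^ 2 ≤ ∑ i, ‖f (σ i) - f (σ (nxt i))‖ ^ 2 := fun σ =>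
    hmin (f ∘ σ) (hcomp σ)
  set c : Fin X.card → Fin X.card → ℝ := fun i j => ‖f i - f j‖ ^ 2 with hcdef
  have hc : ∀ i j, c i j = c j i := fun i j => by
    rw [hcdef]; dsimp only; rw [norm_sub_rev]
  have hrev : ∀ p q : Fin X.card, p.val < q.val →
      c p (nxt p) + c q (nxt q) ≤ c p q + c (nxt p) (nxt q) := by
    intro p q hpq
    have h1 := hle (revPerm p q)
    have h2 := rev_core c hc p q hpq
    have h3 : ∑ i, ‖f i - f (nxt i)‖ ^ 2 = ∑ i, c i (nxt i) := rfl
    rw [h3] at h1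
    have h4 : ∑ i, ‖f (revPerm p q i) - f (revPerm p q (nxt i))‖ ^ 2
        = ∑ i, c (revPerm p q i) (revPerm p q (nxt i)) := rfl
    rw [h4, h2] at h1
    linarith
  have hdb : c i₁ (nxt i₁) + c i₂ (nxt i₂) + c i₃ (nxt i₃) + c i₄ (nxt i₄)
      ≤ c i₁ (nxt i₃) + c i₃ (nxt i₁) + c i₂ (nxt i₄) + c i₄ (nxt i₂) := by
    have h1 := hle (dbPerm i₁ i₂ i₃ i₄ h12 h23 h34)
    have h2 := db_core c i₁ i₂ i₃ i₄ h12 h23 h34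
    have h3 : ∑ i, ‖f i - f (nxt i)‖ ^ 2 = ∑ i, c i (nxt i) := rfl
    rw [h3] at h1
    have h4 : ∑ i, ‖f (dbPerm i₁ i₂ i₃ i₄ h12 h23 h34 i)
          - f (dbPerm i₁ i₂ i₃ i₄ h12 h23 h34 (nxt i))‖ ^ 2
        = ∑ i, c (dbPerm i₁ i₂ i₃ i₄ h12 h23 h34 i) (dbPerm i₁ i₂ i₃ i₄ h12 h23 h34 (nxt i)) := rfl
    rw [h4, h2] at h1
    linarith
  have hA := hrev i₁ i₃ (lt_trans h12 h23)
  have hB := hrev i₂ i₄ (lt_trans h23 h34)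
  have hm1 := four_mid (f i₁) (f (nxt i₁)) (f i₃) (f (nxt i₃))
  have hm2 := four_mid (f i₂) (f (nxt i₂)) (f i₄) (f (nxt i₄))
  have hcv : ∀ i j : Fin X.card, c i j = ‖f i - f j‖ ^ 2 := fun i j => rfl
  simp only [hcv] at hA hB hdb
  linarith [hm1, hm2, hA, hB, hdb]
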